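/- Let R be a group of operators for a finite group G such that every inner automorphism of G lies in the image of R in Aut G (Inn G ≤ Aut_R G). Then G is R-nilpotent if and only if G is nilpotent (equivalently, the internal direct product of its Sylow subgroups) and, for every prime p dividing |G| and every Sylow p-subgroup P of G, Aut_R(P) = N_R(P)/C_R(P) is a p-group, where N_R(P) = {r ∈ R : P^r = P} and C_R(P) = {r ∈ R : x^r = x for all x ∈ P}. -/

import Mathlib

open Pointwise

/-- `opK φ n = Kₙ(G, R)`: `K₀ = G`, `Kₙ₊₁ = [Kₙ, R]` is generated by the `[x, r] = x⁻¹ · x^r`,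
`x ∈ Kₙ(G, R)`, `r ∈ R`. -/
def opK {R G : Type*} [Group R] [Group G] (φ : R →* MulAut G) : ℕ → Subgroup G
  | 0 => ⊤
  | n + 1 => Subgroup.closure {y | ∃ x ∈ opK φ n, ∃ r : R, y = x⁻¹ * φ r x}

/-- `N_R(P) = {r ∈ R : P^r = P}`. -/
def opN {R G : Type*} [Group R] [Group G] (φ : R →* MulAut G) (P : Subgroup G) : Subgroup R :=
  Subgroup.comap φ (MulAction.stabilizer (MulAut G) P)

/-- `C_R(P) = {r ∈ R : x^r = x for all x ∈ P}`. -/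
def opC {R G : Type*} [Group R] [Group G] (φ : R →* MulAut G) (P : Subgroup G) : Subgroup R :=
  Subgroup.comap φ (⨅ x ∈ (P : Set G), MulAction.stabilizer (MulAut G) x)

/-- `C_R(P)` is normal in `N_R(P)`, so the quotient group `Aut_R(P) = N_R(P)/C_R(P)` exists. -/
instance opC_normal_in_opN {R G : Type*} [Group R] [Group G] (φ : R →* MulAut G)
    (P : Subgroup G) : ((opC φ P).subgroupOf (opN φ P)).Normal := by
  constructor
  intro β hβ α
  simp only [Subgroup.mem_subgroupOf, opC, Subgroup.mem_comap, Subgroup.mem_iInf,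
    MulAction.mem_stabilizer_iff] at hβ ⊢
  intro x hx
  have hα : φ (α : R) • P = P := α.2
  have hx' : (φ (α : R))⁻¹ • x ∈ P := by
    rw [← Subgroup.mem_pointwise_smul_iff_inv_smul_mem, hα]
    exact hx
  have hfix := hβ _ hx'
  rw [Subgroup.coe_mul, Subgroup.coe_mul, Subgroup.coe_inv, map_mul, map_mul, map_inv]
  rw [mul_smul, mul_smul, hfix, smul_inv_smul]


section Aux

variable {R G : Type*} [Group R] [Group G] (φ : R →* MulAut G)

/-- The descending series starting at `H` with steps `[·, R]`. -/
def ser (H : Subgroup G) : ℕ → Subgroup G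
  | 0 => H
  | n + 1 => Subgroup.closure {y | ∃ x ∈ ser H n, ∃ r : R, y = x⁻¹ * φ r x}

variable {H : Subgroup G}

theorem ser_succ (n : ℕ) :
    ser φ H (n + 1) = Subgroup.closure {y | ∃ x ∈ ser φ H n, ∃ r : R, y = x⁻¹ * φ r x} := rfl

theorem ser_inv (hH : ∀ (r : R), ∀ x ∈ H, φ r x ∈ H) :
    ∀ (n : ℕ) (r : R), ∀ x ∈ ser φ H n, φ r x ∈ ser φ H n := by
  intro n
  induction n with
  | zero => exact hH
  | succ n ih =>
    intro r x hx
    induction hx using Subgroup.closure_induction with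
    | mem y hy =>
      obtain ⟨z, hz, s, rfl⟩ := hy
      refine Subgroup.subset_closure ⟨φ r z, ih r z hz, r * s * r⁻¹, ?_⟩
      rw [map_mul, map_inv]
      congr 1
      simp only [← MulAut.mul_apply, ← map_mul]
      congr 2
      group
    | one => simpa using one_mem _
    | mul a b _ _ ha hb => rw [map_mul]; exact mul_mem ha hb
    | inv a _ ha => rw [map_inv]; exact inv_mem ha

theorem ser_le_base (hH : ∀ (r : R), ∀ x ∈ H, φ r x ∈ H) :
    ∀ n : ℕ, ser φ H n ≤ H := by
  intro n
  induction n with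
  | zero => exact le_rfl
  | succ n ih =>
    rw [ser_succ]
    refine (Subgroup.closure_le _).mpr ?_
    rintro y ⟨z, hz, r, rfl⟩
    exact mul_mem (inv_mem (ih hz)) (hH r z (ih hz))

theorem ser_succ_le (hH : ∀ (r : R), ∀ x ∈ H, φ r x ∈ H) (n : ℕ) :
    ser φ H (n + 1) ≤ ser φ H n := by
  rw [ser_succ]
  refine (Subgroup.closure_le _).mpr ?_
  rintro y ⟨z, hz, r, rfl⟩
  exact mul_mem (inv_mem hz) (ser_inv φ hH n r z hz)

theorem ser_antitone (hH : ∀ (r : R), ∀ x ∈ H, φ r x ∈ H) {m n : ℕ} (h : m ≤ n) :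
    ser φ H n ≤ ser φ H m := by
  induction h with
  | refl => exact le_rfl
  | step h ih => exact le_trans (ser_succ_le φ hH _) ih

theorem opK_eq_ser : ∀ n : ℕ, opK φ n = ser φ ⊤ n := by
  intro n
  induction n with
  | zero => rfl
  | succ n ih => simp only [opK, ser, ih]

theorem opK_top_inv : ∀ (r : R), ∀ x ∈ (⊤ : Subgroup G), φ r x ∈ (⊤ : Subgroup G) :=
  fun _ _ _ => trivial

end Aux

section Stability

variable {G : Type*} [Group G] [Finite G]

/-- The stability lemma: an automorphism stabilizing a chain from a `p`-subgroup `P` down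
to `⊥` has `p`-power order on `P`. -/
theorem stability {p : ℕ} [Fact p.Prime] (α : MulAut G) :
    ∀ (n : ℕ) (Q : ℕ → Subgroup G) (P : Subgroup G), Q 0 = P → IsPGroup p P → Q n = ⊥ →
      (∀ i, Q (i + 1) ≤ Q i) → (∀ i, ∀ x ∈ Q i, x⁻¹ * α x ∈ Q (i + 1)) →
      ∃ k : ℕ, ∀ x ∈ P, (α ^ p ^ k) x = x := by
  intro n
  induction n with
  | zero =>
    intro Q P hQ0 _ hbot _ _
    refine ⟨0, fun x hx => ?_⟩
    rw [← hQ0, hbot, Subgroup.mem_bot] at hx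
    subst hx
    simp
  | succ n ih =>
    intro Q P hQ0 hP hbot hdesc hchain
    subst hQ0
    have hPQ1 : IsPGroup p (Q 1) := hP.to_le (hdesc 0)
    obtain ⟨k, hk⟩ := ih (fun i => Q (i + 1)) (Q 1) rfl hPQ1 hbot
      (fun i => hdesc (i + 1)) (fun i => hchain (i + 1))
    have hinv1 : ∀ x ∈ Q 1, α x ∈ Q 1 := by
      intro x hx
      have h2 : x⁻¹ * α x ∈ Q 1 := hdesc 1 (hchain 1 x hx)
      have := mul_mem hx h2
      simpa using this
    have hmem1 : ∀ x ∈ Q 0, ∀ m : ℕ, x⁻¹ * (α ^ m) x ∈ Q 1 := by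
      intro x hx m
      induction m with
      | zero => simpa using one_mem _
      | succ m ihm =>
        have key : x⁻¹ * (α ^ (m + 1)) x = (x⁻¹ * α x) * α (x⁻¹ * (α ^ m) x) := by
          rw [map_mul, map_inv, pow_succ', MulAut.mul_apply]
          group
        rw [key]
        exact mul_mem (hchain 0 x hx) (hinv1 _ ihm)
    obtain ⟨e, he⟩ := IsPGroup.iff_card.mp hPQ1
    refine ⟨k + e, fun x hx => ?_⟩
    set β := α ^ p ^ k with hβ
    set c := x⁻¹ * β x with hc
    have hcQ1 : c ∈ Q 1 := hmem1 x hx (p ^ k)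
    have hfixc : β c = c := hk c hcQ1
    have hβx : β x = x * c := by rw [hc]; group
    have hpow : ∀ m : ℕ, (β ^ m) x = x * c ^ m := by
      intro m
      induction m with
      | zero => simp
      | succ m ihm =>
        rw [pow_succ', MulAut.mul_apply, ihm, map_mul, map_pow, hfixc, hβx, pow_succ]
        group
    have hce : c ^ p ^ e = 1 := by
      have h1 : (⟨c, hcQ1⟩ : Q 1) ^ p ^ e = 1 := by
        rw [← he]
        exact pow_card_eq_one'
      have := congrArg (Subgroup.subtype (Q 1)) h1
      simpa using this
    have : (α ^ p ^ (k + e)) x = (β ^ p ^ e) x := by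
      rw [hβ, ← pow_mul, ← pow_add]
    rw [this, hpow, hce, mul_one]

end Stability

section Forward

variable {R G : Type*} [Group R] [Group G] (φ : R →* MulAut G)

theorem lcs_le_opK (hInn : ∀ g : G, MulAut.conj g ∈ φ.range) :
    ∀ n : ℕ, (⊤ : Subgroup G).lowerCentralSeries n ≤ opK φ n := by
  intro n
  induction n with
  | zero => exact le_top
  | succ n ih =>
    rw [lowerCentralSeries_succ]
    refine Subgroup.commutator_le.mpr fun g₁ hg₁ g₂ _ => ?_
    obtain ⟨r, hr⟩ := hInn g₂
    refine Subgroup.subset_closure ⟨g₁⁻¹, inv_mem (ih hg₁), r, ?_⟩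
    rw [hr, MulAut.conj_apply, commutatorElement_def]
    group

theorem forward_nilpotent (hInn : ∀ g : G, MulAut.conj g ∈ φ.range)
    {n : ℕ} (hKn : opK φ n = ⊥) : Group.IsNilpotent G := by
  refine nilpotent_iff_lowerCentralSeries.mpr ⟨n, ?_⟩
  rw [eq_bot_iff, ← hKn]
  exact lcs_le_opK φ hInn n

theorem forward_sylow [Finite G] {n : ℕ} (hKn : opK φ n = ⊥)
    {p : ℕ} (hp : p.Prime) (P : Sylow p G) :
    IsPGroup p (↥(opN φ (P : Subgroup G)) ⧸
      (opC φ (P : Subgroup G)).subgroupOf (opN φ (P : Subgroup G))) := by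
  haveI := Fact.mk hp
  intro g
  obtain ⟨r, rfl⟩ := QuotientGroup.mk_surjective g
  have hrN : φ (r : R) • (P : Subgroup G) = (P : Subgroup G) := r.2
  have hinv : ∀ x ∈ (P : Subgroup G), φ (r : R) x ∈ (P : Subgroup G) := by
    intro x hx
    have := Subgroup.smul_mem_pointwise_smul x (φ (r : R)) (P : Subgroup G) hx
    rwa [hrN, MulAut.smul_def] at this
  obtain ⟨k, hk⟩ := stability (φ (r : R)) n (fun i => opK φ i ⊓ (P : Subgroup G))
    (P : Subgroup G)
    (by simp [opK])
    P.isPGroup'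
    (by simp only [hKn]; exact bot_inf_eq _)
    (fun i => inf_le_inf_right _ (by
      rw [opK_eq_ser φ (i + 1), opK_eq_ser φ i]
      exact ser_succ_le φ (opK_top_inv φ) i))
    (fun i x hx => by
      obtain ⟨hx1, hx2⟩ := Subgroup.mem_inf.mp hx
      exact Subgroup.mem_inf.mpr ⟨Subgroup.subset_closure ⟨x, hx1, (r : R), rfl⟩,
        mul_mem (inv_mem hx2) (hinv x hx2)⟩)
  refine ⟨k, ?_⟩
  rw [← QuotientGroup.mk_pow, QuotientGroup.eq_one_iff]
  rw [Subgroup.mem_subgroupOf]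
  simp only [opC, Subgroup.mem_comap, Subgroup.mem_iInf, MulAction.mem_stabilizer_iff]
  intro x hx
  have hcoe : ((r ^ p ^ k : ↥(opN φ (P : Subgroup G))) : R) = (r : R) ^ p ^ k := rfl
  rw [MulAut.smul_def, hcoe, map_pow]
  exact hk x hx

end Forward

section Crux

open SemidirectProduct
open scoped commutatorElement

variable {R G : Type*} [Group R] [Group G] (φ : R →* MulAut G)

/-- Restriction of the action of `R` to an invariant subgroup. -/
def autRestrict (P : Subgroup G) (hc : ∀ (r : R), ∀ x ∈ P, φ r x ∈ P) : R →* MulAut ↥P where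
  toFun r :=
    { toFun := fun x => ⟨φ r ↑x, hc r ↑x x.2⟩
      invFun := fun x => ⟨φ r⁻¹ ↑x, hc r⁻¹ ↑x x.2⟩
      left_inv := fun x => Subtype.ext (by
        show φ r⁻¹ (φ r ↑x) = ↑x
        rw [← MulAut.mul_apply, ← map_mul, inv_mul_cancel, map_one, MulAut.one_apply])
      right_inv := fun x => Subtype.ext (by
        show φ r (φ r⁻¹ ↑x) = ↑x
        rw [← MulAut.mul_apply, ← map_mul, mul_inv_cancel, map_one, MulAut.one_apply])
      map_mul' := fun x y => Subtype.ext (map_mul (φ r) ↑x ↑y) }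
  map_one' := MulEquiv.ext fun x => Subtype.ext (by
    show φ 1 ↑x = ↑x
    rw [map_one, MulAut.one_apply])
  map_mul' r s := MulEquiv.ext fun x => Subtype.ext (by
    show φ (r * s) ↑x = φ r (φ s ↑x)
    rw [map_mul, MulAut.mul_apply])

theorem crux [Finite R] [Finite G] {p : ℕ} [Fact p.Prime] (P : Sylow p G)
    (hchar : (P : Subgroup G).Characteristic)
    (hq : IsPGroup p (↥(opN φ (P : Subgroup G)) ⧸
      (opC φ (P : Subgroup G)).subgroupOf (opN φ (P : Subgroup G)))) :
    ∃ m : ℕ, ser φ ((P : Subgroup G)) m = ⊥ := by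
  classical
  set Ps : Subgroup G := (P : Subgroup G) with hPs
  have hinv : ∀ (r : R), ∀ x ∈ Ps, φ r x ∈ Ps := by
    intro r x hx
    have hfix := hchar.fixed (φ r)
    have hx' : x ∈ Ps.comap ((φ r : G ≃* G)).toMonoidHom := by rw [hfix]; exact hx
    simpa using Subgroup.mem_comap.mp hx'
  have hNtop : opN φ Ps = ⊤ := by
    rw [Subgroup.eq_top_iff']
    intro r
    rw [opN, Subgroup.mem_comap, MulAction.mem_stabilizer_iff]
    ext x
    rw [Subgroup.mem_pointwise_smul_iff_inv_smul_mem]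
    have hsmul : (φ r)⁻¹ • x = φ r⁻¹ x := by rw [← map_inv, MulAut.smul_def]
    constructor
    · intro hx
      rw [hsmul] at hx
      have h3 := hinv r _ hx
      rwa [← MulAut.mul_apply, ← map_mul, mul_inv_cancel, map_one, MulAut.one_apply] at h3
    · intro hx
      rw [hsmul]
      exact hinv r⁻¹ x hx
  set Cs := (opC φ Ps).subgroupOf (opN φ Ps) with hCs
  let Ψ : ↥(opN φ Ps) →* MulAut ↥Ps := (autRestrict φ Ps hinv).comp (Subgroup.subtype _)
  have hker : Cs ≤ Ψ.ker := by
    intro r hr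
    have hr' : (r : R) ∈ opC φ Ps := Subgroup.mem_subgroupOf.mp hr
    simp only [opC, Subgroup.mem_comap, Subgroup.mem_iInf, MulAction.mem_stabilizer_iff,
      MulAut.smul_def] at hr'
    rw [MonoidHom.mem_ker]
    refine MulEquiv.ext fun x => Subtype.ext ?_
    show φ (r : R) ↑x = ↑x
    exact hr' ↑x x.2
  let ψ : (↥(opN φ Ps) ⧸ Cs) →* MulAut ↥Ps := QuotientGroup.lift Cs Ψ hker
  let W := ↥Ps ⋊[ψ] (↥(opN φ Ps) ⧸ Cs)
  let e : W ≃ ↥Ps × (↥(opN φ Ps) ⧸ Cs) :=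
    ⟨fun w => (w.left, w.right), fun z => ⟨z.1, z.2⟩, fun w => rfl, fun z => rfl⟩
  haveI : Finite W := Finite.of_equiv _ e.symm
  have hW : IsPGroup p W := by
    obtain ⟨a, ha⟩ := IsPGroup.iff_card.mp P.isPGroup'
    obtain ⟨b, hb⟩ := IsPGroup.iff_card.mp hq
    refine IsPGroup.iff_card.mpr ⟨a + b, ?_⟩
    rw [Nat.card_congr e, Nat.card_prod, ha, hb, pow_add]
  haveI hWnil : Group.IsNilpotent W := hW.isNilpotent
  obtain ⟨m, hm⟩ := nilpotent_iff_lowerCentralSeries.mp hWnil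
  have key : ∀ i : ℕ, ∀ x, x ∈ ser φ Ps i → ∀ hxP : x ∈ Ps,
      (SemidirectProduct.inl ⟨x, hxP⟩ : W) ∈ (⊤ : Subgroup W).lowerCentralSeries i := by
    intro i
    induction i with
    | zero => intro x _ hxP; exact Subgroup.mem_top _
    | succ i ih =>
      intro x hx
      induction hx using Subgroup.closure_induction with
      | mem y hy =>
        obtain ⟨z, hz, r, rfl⟩ := hy
        intro hyP
        have hzP : z ∈ Ps := ser_le_base φ hinv i hz
        have hrN : r ∈ opN φ Ps := by rw [hNtop]; exact Subgroup.mem_top r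
        set rq : ↥(opN φ Ps) ⧸ Cs := QuotientGroup.mk (⟨r, hrN⟩ : ↥(opN φ Ps)) with hrq
        set a : ↥Ps := ⟨z, hzP⟩ with hazP
        have hψ : ψ rq a = ⟨φ r z, hinv r z hzP⟩ := rfl
        have hcomm : ⁅((inl a : W))⁻¹, (inr rq : W)⁆ = inl ⟨z⁻¹ * φ r z, hyP⟩ := by
          calc ⁅((inl a : W))⁻¹, (inr rq : W)⁆
              = (inl a : W)⁻¹ * ((inr rq : W) * inl a * (inr rq : W)⁻¹) := by
                rw [commutatorElement_def]; group
            _ = (inl a : W)⁻¹ * ((inr rq : W) * inl a * (inr rq⁻¹ : W)) := by rw [map_inv]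
            _ = (inl a : W)⁻¹ * inl (ψ rq a) := by rw [← SemidirectProduct.inl_aut]
            _ = inl (a⁻¹ * ψ rq a) := by rw [map_mul, map_inv]
            _ = inl ⟨z⁻¹ * φ r z, hyP⟩ := by rw [hψ]; rfl
        rw [← hcomm, lowerCentralSeries_succ]
        exact Subgroup.commutator_mem_commutator (inv_mem (ih z hz hzP)) (Subgroup.mem_top _)
      | one =>
        intro h1P
        have h1 : (⟨1, h1P⟩ : ↥Ps) = 1 := rfl
        rw [h1, map_one]
        exact one_mem _
      | mul u v hu hv ihu ihv =>
        intro hP'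
        have huP : u ∈ Ps := ser_le_base φ hinv (i + 1) (by rw [ser_succ]; exact hu)
        have hvP : v ∈ Ps := ser_le_base φ hinv (i + 1) (by rw [ser_succ]; exact hv)
        have h1 : (⟨u * v, hP'⟩ : ↥Ps) = ⟨u, huP⟩ * ⟨v, hvP⟩ := rfl
        rw [h1, map_mul]
        exact mul_mem (ihu huP) (ihv hvP)
      | inv u hu ihu =>
        intro hP'
        have huP : u ∈ Ps := ser_le_base φ hinv (i + 1) (by rw [ser_succ]; exact hu)
        have h1 : (⟨u⁻¹, hP'⟩ : ↥Ps) = (⟨u, huP⟩)⁻¹ := rfl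
        rw [h1, map_inv]
        exact inv_mem (ihu huP)
  refine ⟨m, ?_⟩
  rw [eq_bot_iff]
  intro x hx
  have hxP : x ∈ Ps := ser_le_base φ hinv m hx
  have h2 := key m x hx hxP
  rw [hm, Subgroup.mem_bot] at h2
  have h3 : (⟨x, hxP⟩ : ↥Ps) = 1 := SemidirectProduct.inl_injective (by rw [h2, map_one])
  rw [Subgroup.mem_bot]
  simpa using congrArg Subtype.val h3

end Crux

section Reverse

variable {R G : Type*} [Group R] [Group G] (φ : R →* MulAut G)

theorem ser_normal (hInn : ∀ g : G, MulAut.conj g ∈ φ.range) {H : Subgroup G}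
    (hH : ∀ (r : R), ∀ x ∈ H, φ r x ∈ H) (n : ℕ) : (ser φ H n).Normal := by
  constructor
  intro x hx g
  obtain ⟨r, hr⟩ := hInn g
  have h2 := ser_inv φ hH n r x hx
  rw [hr, MulAut.conj_apply] at h2
  exact h2

theorem normal_iSup {ι : Sort*} (f : ι → Subgroup G) (hf : ∀ i, (f i).Normal) :
    (⨆ i, f i).Normal := by
  constructor
  intro y hy g
  refine Subgroup.iSup_induction f (C := fun y => g * y * g⁻¹ ∈ ⨆ i, f i) hy ?_ ?_ ?_
  · intro i x hx
    exact Subgroup.mem_iSup_of_mem i ((hf i).conj_mem x hx g)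
  · simpa using one_mem _
  · intro a b ha hb
    have h3 : g * (a * b) * g⁻¹ = (g * a * g⁻¹) * (g * b * g⁻¹) := by group
    rw [h3]
    exact mul_mem ha hb

theorem sylow_iSup_eq_top (G : Type*) [Group G] [Finite G]
    (S : ∀ q : (Nat.card G).primeFactors, Sylow (q : ℕ) G) :
    (⨆ q : (Nat.card G).primeFactors, ((S q : Subgroup G))) = ⊤ := by
  set H := ⨆ q : (Nat.card G).primeFactors, ((S q : Subgroup G)) with hHdef
  have hG0 : Nat.card G ≠ 0 := Nat.card_pos.ne'
  have hH0 : Nat.card H ≠ 0 := Nat.card_pos.ne'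
  apply Subgroup.eq_top_of_card_eq
  refine Nat.dvd_antisymm H.card_subgroup_dvd_card ?_
  rw [← Nat.factorization_le_iff_dvd hG0 hH0]
  refine (Finsupp.le_iff _ _).mpr ?_
  intro q hq
  rw [Nat.support_factorization] at hq
  haveI := Fact.mk (Nat.prime_of_mem_primeFactors hq)
  have hcard : Nat.card ((S ⟨q, hq⟩ : Subgroup G)) = q ^ (Nat.card G).factorization q :=
    Sylow.card_eq_multiplicity (S ⟨q, hq⟩)
  have hdvd : q ^ (Nat.card G).factorization q ∣ Nat.card H := by
    rw [← hcard]
    exact Subgroup.card_dvd_of_le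
      (le_iSup (fun q : (Nat.card G).primeFactors => ((S q : Subgroup G))) ⟨q, hq⟩)
  exact (Nat.Prime.pow_dvd_iff_le_factorization (Nat.prime_of_mem_primeFactors hq) hH0).mp hdvd

end Reverse

/-- Let `R` be a group of operators for a finite group `G` (acting via `φ : R →* Aut G`) such
that every inner automorphism of `G` lies in `φ(R)`. Then `G` is `R`-nilpotent iff `G` is
nilpotent (the direct product of its Sylow subgroups) and `Aut_R(P) = N_R(P)/C_R(P)` is a
`p`-group for every prime `p` dividing `|G|` and every Sylow `p`-subgroup `P` of `G`. -/
theorem opNilpotent_iff_nilpotent_and_sylow_condition (R G : Type*) [Group R] [Group G]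
    [Finite R] [Finite G] (φ : R →* MulAut G) (hInn : ∀ g : G, MulAut.conj g ∈ φ.range) :
    (∃ n : ℕ, opK φ n = ⊥) ↔
      Group.IsNilpotent G ∧
        ∀ p : ℕ, p.Prime → p ∣ Nat.card G → ∀ P : Sylow p G,
          IsPGroup p (↥(opN φ (P : Subgroup G)) ⧸
            (opC φ (P : Subgroup G)).subgroupOf (opN φ (P : Subgroup G))) := by
  constructor
  · rintro ⟨n, hKn⟩
    exact ⟨forward_nilpotent φ hInn hKn, fun p hp _ P => forward_sylow φ hKn hp P⟩
  · rintro ⟨hnil, hSyl⟩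
    classical
    have hnormal := ((isNilpotent_of_finite_tfae (G := G)).out 0 3).mp hnil
    have hfact : ∀ q : (Nat.card G).primeFactors, Fact (Nat.Prime (q : ℕ)) :=
      fun q => Fact.mk (Nat.prime_of_mem_primeFactors q.2)
    let S : ∀ q : (Nat.card G).primeFactors, Sylow (q : ℕ) G := fun q =>
      letI := hfact q; Classical.arbitrary _
    have hchar : ∀ q : (Nat.card G).primeFactors, ((S q : Subgroup G)).Characteristic :=
      fun q => letI := hfact q
        Sylow.characteristic_of_normal _ (hnormal _ (hfact q) (S q))
    have hinvq : ∀ (q : (Nat.card G).primeFactors) (r : R),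
        ∀ x ∈ (S q : Subgroup G), φ r x ∈ (S q : Subgroup G) := by
      intro q r x hx
      have hfix := (hchar q).fixed (φ r)
      have hx' : x ∈ (S q : Subgroup G).comap ((φ r : G ≃* G)).toMonoidHom := by
        rw [hfix]; exact hx
      simpa using Subgroup.mem_comap.mp hx'
    have hser : ∀ q : (Nat.card G).primeFactors, ∃ m, ser φ ((S q : Subgroup G)) m = ⊥ := by
      intro q
      letI := hfact q
      exact crux φ (S q) (hchar q)
        (hSyl q (Nat.prime_of_mem_primeFactors q.2) (Nat.dvd_of_mem_primeFactors q.2) (S q))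
    choose mfun hmfun using hser
    set M := Finset.univ.sup mfun with hM
    have hKle : ∀ n : ℕ, opK φ n ≤
        ⨆ q : (Nat.card G).primeFactors, ser φ ((S q : Subgroup G)) n := by
      intro n
      induction n with
      | zero =>
        have h0 : (⨆ q : (Nat.card G).primeFactors, ser φ ((S q : Subgroup G)) 0)
            = ⊤ := sylow_iSup_eq_top G S
        rw [h0]
        exact le_top
      | succ n ih =>
        have hnorm : (⨆ q : (Nat.card G).primeFactors,
            ser φ ((S q : Subgroup G)) (n + 1)).Normal :=
          normal_iSup _ (fun q => ser_normal φ hInn (hinvq q) (n + 1))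
        simp only [opK]
        refine (Subgroup.closure_le _).mpr ?_
        rintro y ⟨x, hx, r, rfl⟩
        have hxM := ih hx
        refine Subgroup.iSup_induction
          (fun q : (Nat.card G).primeFactors => ser φ ((S q : Subgroup G)) n)
          (C := fun x => x⁻¹ * φ r x ∈
            ⨆ q : (Nat.card G).primeFactors, ser φ ((S q : Subgroup G)) (n + 1))
          hxM ?_ ?_ ?_
        · intro q z hz
          refine Subgroup.mem_iSup_of_mem q ?_
          rw [ser_succ]
          exact Subgroup.subset_closure ⟨z, hz, r, rfl⟩
        · simpa using one_mem _
        · intro u v hu hv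
          have heq : (u * v)⁻¹ * φ r (u * v)
              = (v⁻¹ * (u⁻¹ * φ r u) * v) * (v⁻¹ * φ r v) := by
            rw [map_mul]; group
          rw [heq]
          have hconj := hnorm.conj_mem _ hu v⁻¹
          rw [inv_inv] at hconj
          exact mul_mem hconj hv
    refine ⟨M, le_bot_iff.mp (le_trans (hKle M) (iSup_le fun q => ?_))⟩
    have h1 : ser φ ((S q : Subgroup G)) M ≤ ser φ ((S q : Subgroup G)) (mfun q) :=
      ser_antitone φ (hinvq q) (Finset.le_sup (Finset.mem_univ q))
    exact h1.trans (hmfun q).le
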